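/- Call a directed cycle in the system graph irreducible if it cannot be written as the concatenation of two shorter directed cycles, equivalently it visits no vertex twice (a simple directed cycle). Every simple directed cycle C in the system graph of a system S gives rise to an organizer: setting n(j) = 1 for entities j on C and 0 otherwise, u(i) = 1 for transformations i on C and 0 otherwise, and A the subsystem with A₀[i,j] = 1 when edge j → i is in C, A₁[i,j] = 1 when edge i → j is in C, and 0 otherwise, yields a nonzero subsystem A ≤ S with A₀ n = A₁ n and A₀ᵀ u = A₁ᵀ u, with n and u full internal. -/

import Mathlib

open Finset

/-- Every simple (irreducible) directed cycle in the system graph of a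
system `S = (S0, S1)` gives rise to an organizer: take `A` with unit entries on the
edges of the cycle, and `n`, `u` with value `1` exactly on the entities resp.
transformations of the cycle. The cycle alternates entities `e m` and
transformations `t m`, with edges `e m → t m` (so `S0 (t m) (e m) > 0`) and
`t m → e (m+1)` (so `S1 (t m) (e (m+1)) > 0`), indices taken cyclically. -/
theorem stmt_6 {T E : Type*} [Fintype T] [Fintype E] [DecidableEq T] [DecidableEq E]
    (S0 S1 : T → E → ℕ) (k : ℕ)
    (e : Fin (k + 1) → E) (t : Fin (k + 1) → T)
    (he : Function.Injective e) (ht : Function.Injective t)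
    (hin : ∀ m, 0 < S0 (t m) (e m))
    (hout : ∀ m, 0 < S1 (t m) (e (m + 1))) :
    ∀ A0 A1 : T → E → ℕ, ∀ n : E → ℕ, ∀ u : T → ℕ,
    (A0 = fun i j => if ∃ m, t m = i ∧ e m = j then 1 else 0) →
    (A1 = fun i j => if ∃ m, t m = i ∧ e (m + 1) = j then 1 else 0) →
    (n = fun j => if ∃ m, e m = j then 1 else 0) →
    (u = fun i => if ∃ m, t m = i then 1 else 0) →
    -- A is a subsystem of S
    (∀ i j, A0 i j ≤ S0 i j) ∧ (∀ i j, A1 i j ≤ S1 i j) ∧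
    -- A is nonzero
    (∃ i j, 0 < A0 i j ∨ 0 < A1 i j) ∧
    -- n is a full internal entity vector
    (∀ j : E, (∃ i, 0 < A0 i j ∨ 0 < A1 i j) ↔ 0 < n j) ∧
    -- u is a full internal transformation vector
    (∀ i : T, (∃ j, 0 < A0 i j ∨ 0 < A1 i j) ↔ 0 < u i) ∧
    -- conservation equation A0 n = A1 n
    (∀ i : T, ∑ j, A0 i j * n j = ∑ j, A1 i j * n j) ∧
    -- cycle equation A0ᵀ u = A1ᵀ u
    (∀ j : E, ∑ i, A0 i j * u i = ∑ i, A1 i j * u i) := by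
  intro A0 A1 n u hA0 hA1 hn hu
  subst hA0; subst hA1; subst hn; subst hu
  refine ⟨?_, ?_, ?_, ?_, ?_, ?_, ?_⟩
  · intro i j
    by_cases h : ∃ m, t m = i ∧ e m = j
    · obtain ⟨m, hi, hj⟩ := h
      subst hi; subst hj
      have c : ∃ m', t m' = t m ∧ e m' = e m := ⟨m, rfl, rfl⟩
      simpa [c, Nat.one_le_iff_ne_zero, Nat.pos_iff_ne_zero] using hin m
    · simp [h]
  · intro i j
    by_cases h : ∃ m, t m = i ∧ e (m + 1) = j
    · obtain ⟨m, hi, hj⟩ := h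
      subst hi; subst hj
      have c : ∃ m', t m' = t m ∧ e (m' + 1) = e (m + 1) := ⟨m, rfl, rfl⟩
      simpa [c, Nat.one_le_iff_ne_zero, Nat.pos_iff_ne_zero] using hout m
    · simp [h]
  · refine ⟨t 0, e 0, Or.inl ?_⟩
    have h : ∃ m, t m = t 0 ∧ e m = e 0 := ⟨0, rfl, rfl⟩
    simp [h]
  · intro j
    constructor
    · rintro ⟨i, h | h⟩
      · by_cases hc : ∃ m, t m = i ∧ e m = j
        · obtain ⟨m, _, hj⟩ := hc
          have : ∃ m, e m = j := ⟨m, hj⟩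
          simp [this]
        · simp [hc] at h
      · by_cases hc : ∃ m, t m = i ∧ e (m + 1) = j
        · obtain ⟨m, _, hj⟩ := hc
          have : ∃ m', e m' = j := ⟨m + 1, hj⟩
          simp [this]
        · simp [hc] at h
    · intro h
      by_cases hc : ∃ m, e m = j
      · obtain ⟨m, hj⟩ := hc
        refine ⟨t m, Or.inl ?_⟩
        have : ∃ m', t m' = t m ∧ e m' = j := ⟨m, rfl, hj⟩
        simp [this]
      · simp [hc] at h
  · intro i
    constructor
    · rintro ⟨j, h | h⟩
      · by_cases hc : ∃ m, t m = i ∧ e m = j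
        · obtain ⟨m, hi, _⟩ := hc
          have : ∃ m, t m = i := ⟨m, hi⟩
          simp [this]
        · simp [hc] at h
      · by_cases hc : ∃ m, t m = i ∧ e (m + 1) = j
        · obtain ⟨m, hi, _⟩ := hc
          have : ∃ m, t m = i := ⟨m, hi⟩
          simp [this]
        · simp [hc] at h
    · intro h
      by_cases hc : ∃ m, t m = i
      · obtain ⟨m, hi⟩ := hc
        refine ⟨e m, Or.inl ?_⟩
        have : ∃ m', t m' = i ∧ e m' = e m := ⟨m, hi, rfl⟩
        simp [this]
      · simp [hc] at h
  · intro i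
    by_cases hi : ∃ m, t m = i
    · obtain ⟨m, rfl⟩ := hi
      have h0 : ∀ j, ((if ∃ m', t m' = t m ∧ e m' = j then 1 else 0) *
          (if ∃ m'', e m'' = j then 1 else 0) : ℕ) = if e m = j then 1 else 0 := by
        intro j
        by_cases hj : e m = j
        · subst hj
          have c1 : ∃ m', t m' = t m ∧ e m' = e m := ⟨m, rfl, rfl⟩
          have c2 : ∃ m'', e m'' = e m := ⟨m, rfl⟩
          simp [c1, c2]
        · have c1 : ¬ ∃ m', t m' = t m ∧ e m' = j := by
            rintro ⟨m', hm', rfl⟩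
            exact hj (by rw [ht hm'])
          simp [c1, hj]
      have h1 : ∀ j, ((if ∃ m', t m' = t m ∧ e (m' + 1) = j then 1 else 0) *
          (if ∃ m'', e m'' = j then 1 else 0) : ℕ) = if e (m + 1) = j then 1 else 0 := by
        intro j
        by_cases hj : e (m + 1) = j
        · subst hj
          have c1 : ∃ m', t m' = t m ∧ e (m' + 1) = e (m + 1) := ⟨m, rfl, rfl⟩
          have c2 : ∃ m'', e m'' = e (m + 1) := ⟨m + 1, rfl⟩
          simp [c1, c2]
        · have c1 : ¬ ∃ m', t m' = t m ∧ e (m' + 1) = j := by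
            rintro ⟨m', hm', rfl⟩
            exact hj (by rw [ht hm'])
          simp [c1, hj]
      simp only [h0, h1, Finset.sum_ite_eq, Finset.mem_univ, if_true]
    · have z0 : ∀ j, ¬ (∃ m, t m = i ∧ e m = j) := by
        rintro j ⟨m, hm, _⟩
        exact hi ⟨m, hm⟩
      have z1 : ∀ j, ¬ (∃ m, t m = i ∧ e (m + 1) = j) := by
        rintro j ⟨m, hm, _⟩
        exact hi ⟨m, hm⟩
      calc (∑ j, (if ∃ m, t m = i ∧ e m = j then 1 else 0) *
              (if ∃ m, e m = j then 1 else 0) : ℕ)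
          = 0 := by
            refine Finset.sum_eq_zero fun j _ => ?_
            simp [z0 j]
        _ = ∑ j, (if ∃ m, t m = i ∧ e (m + 1) = j then 1 else 0) *
              (if ∃ m, e m = j then 1 else 0) := by
            refine (Finset.sum_eq_zero fun j _ => ?_).symm
            simp [z1 j]
  · intro j
    by_cases hj : ∃ m, e m = j
    · obtain ⟨m, rfl⟩ := hj
      have h0 : ∀ i, ((if ∃ m', t m' = i ∧ e m' = e m then 1 else 0) *
          (if ∃ m'', t m'' = i then 1 else 0) : ℕ) = if t m = i then 1 else 0 := by
        intro i
        by_cases hi : t m = i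
        · subst hi
          have c1 : ∃ m', t m' = t m ∧ e m' = e m := ⟨m, rfl, rfl⟩
          have c2 : ∃ m'', t m'' = t m := ⟨m, rfl⟩
          simp [c1, c2]
        · have c1 : ¬ ∃ m', t m' = i ∧ e m' = e m := by
            rintro ⟨m', rfl, hm'⟩
            exact hi (by rw [he hm'])
          simp [c1, hi]
      have h1 : ∀ i, ((if ∃ m', t m' = i ∧ e (m' + 1) = e m then 1 else 0) *
          (if ∃ m'', t m'' = i then 1 else 0) : ℕ) = if t (m - 1) = i then 1 else 0 := by
        intro i
        have hm1 : m - 1 + 1 = m := by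
          simp [sub_add_cancel]
        by_cases hi : t (m - 1) = i
        · subst hi
          have c1 : ∃ m', t m' = t (m - 1) ∧ e (m' + 1) = e m := ⟨m - 1, rfl, by rw [hm1]⟩
          have c2 : ∃ m'', t m'' = t (m - 1) := ⟨m - 1, rfl⟩
          simp [c1, c2]
        · have c1 : ¬ ∃ m', t m' = i ∧ e (m' + 1) = e m := by
            rintro ⟨m', rfl, hm'⟩
            have : m' = m - 1 := eq_sub_of_add_eq (he hm')
            exact hi (by rw [this])
          simp [c1, hi]
      simp only [h0, h1, Finset.sum_ite_eq, Finset.mem_univ, if_true]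
    · have z0 : ∀ i, ¬ (∃ m, t m = i ∧ e m = j) := by
        rintro i ⟨m, _, hm⟩
        exact hj ⟨m, hm⟩
      have z1 : ∀ i, ¬ (∃ m, t m = i ∧ e (m + 1) = j) := by
        rintro i ⟨m, _, hm⟩
        exact hj ⟨m + 1, hm⟩
      calc (∑ i, (if ∃ m, t m = i ∧ e m = j then 1 else 0) *
              (if ∃ m, t m = i then 1 else 0) : ℕ)
          = 0 := Finset.sum_eq_zero fun i _ => by simp [z0 i]
        _ = ∑ i, (if ∃ m, t m = i ∧ e (m + 1) = j then 1 else 0) *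
              (if ∃ m, t m = i then 1 else 0) :=
            (Finset.sum_eq_zero fun i _ => by simp [z1 i]).symm
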